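/- Let λ : [0,∞) → ℝ be continuous, nonnegative, nonincreasing with b₀ := ∫₀^∞ t·λ(t) dt < ∞ and b₁ := ∫₀^∞ λ(t) dt. Let h ≥ 0 and y solve y'' = λ·y, y(0)=1, y'(0)=h. Then y(t) ≤ e^{b₀}·(h·(1+b₀) + b₁)·t + 1 for all t ≥ 0. -/

import Mathlib

open MeasureTheory

/-- With `l` continuous, nonnegative, nonincreasing, `b₀ = ∫₀^∞ t·l t dt < ∞`,
`b₁ = ∫₀^∞ l t dt`, and `y'' = l·y`, `y 0 = 1`, `y' 0 = h ≥ 0`, we have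
`y t ≤ e^{b₀}·(h·(1+b₀) + b₁)·t + 1` for all `t ≥ 0`. -/
theorem stmt_8 (l y y' : ℝ → ℝ) (h : ℝ)
    (hl : ContinuousOn l (Set.Ici 0))
    (hlnn : ∀ t ≥ (0:ℝ), 0 ≤ l t)
    (hlmono : AntitoneOn l (Set.Ici 0))
    (hb0int : IntegrableOn (fun t => t * l t) (Set.Ioi 0))
    (hb1int : IntegrableOn l (Set.Ioi 0))
    (hh : 0 ≤ h)
    (hy : ∀ t ≥ (0:ℝ), HasDerivAt y (y' t) t)
    (hy' : ∀ t ≥ (0:ℝ), HasDerivAt y' (l t * y t) t)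
    (hy'c : ContinuousOn y' (Set.Ici 0))
    (hy0 : y 0 = 1) (hy'0 : y' 0 = h) :
    ∀ t ≥ (0:ℝ),
      y t ≤ Real.exp (∫ s in Set.Ioi (0:ℝ), s * l s) *
        (h * (1 + ∫ s in Set.Ioi (0:ℝ), s * l s) + ∫ s in Set.Ioi (0:ℝ), l s) * t + 1 := by
  have hyc : ContinuousOn y (Set.Ici 0) := fun t ht =>
    (hy t ht).continuousAt.continuousWithinAt
  -- positivity of y on [0, ∞)
  have hpos : ∀ t ≥ (0:ℝ), 0 < y t := by
    by_contra hcon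
    push_neg at hcon
    obtain ⟨t₀, ht₀, hyt₀⟩ := hcon
    set K : Set ℝ := Set.Ici 0 ∩ y ⁻¹' Set.Iic 0 with hK
    have hKne : K.Nonempty := ⟨t₀, ht₀, hyt₀⟩
    have hKbdd : BddBelow K := ⟨0, fun x hx => hx.1⟩
    have hKclosed : IsClosed K :=
      hyc.preimage_isClosed_of_isClosed isClosed_Ici isClosed_Iic
    set T := sInf K with hTdef
    have hTK : T ∈ K := hKclosed.csInf_mem hKne hKbdd
    have hT0 : (0:ℝ) ≤ T := hTK.1
    have hTy : y T ≤ 0 := hTK.2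
    have hTpos : 0 < T := by
      rcases lt_or_eq_of_le hT0 with h' | h'
      · exact h'
      · exfalso; rw [← h', hy0] at hTy; linarith
    have hlt : ∀ s, 0 ≤ s → s < T → 0 < y s := by
      intro s hs hsT
      by_contra hys
      push_neg at hys
      exact absurd (csInf_le hKbdd ⟨hs, hys⟩) (not_le.2 hsT)
    have hy'm : MonotoneOn y' (Set.Icc 0 T) := by
      apply monotoneOn_of_deriv_nonneg (convex_Icc 0 T) (hy'c.mono Set.Icc_subset_Ici_self)
      · intro x hx
        rw [interior_Icc] at hx
        exact (hy' x hx.1.le).differentiableAt.differentiableWithinAt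
      · intro x hx
        rw [interior_Icc] at hx
        rw [(hy' x hx.1.le).deriv]
        exact mul_nonneg (hlnn x hx.1.le) (hlt x hx.1.le hx.2).le
    have hy'nn : ∀ s ∈ Set.Icc (0:ℝ) T, 0 ≤ y' s := by
      intro s hs
      have := hy'm ⟨le_rfl, hT0⟩ hs hs.1
      rw [hy'0] at this
      linarith
    have hym : MonotoneOn y (Set.Icc 0 T) := by
      apply monotoneOn_of_deriv_nonneg (convex_Icc 0 T) (hyc.mono Set.Icc_subset_Ici_self)
      · intro x hx
        rw [interior_Icc] at hx
        exact (hy x hx.1.le).differentiableAt.differentiableWithinAt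
      · intro x hx
        rw [interior_Icc] at hx
        rw [(hy x hx.1.le).deriv]
        exact hy'nn x ⟨hx.1.le, hx.2.le⟩
    have h1T : (1:ℝ) ≤ y T := by
      have := hym ⟨le_rfl, hT0⟩ ⟨hT0, le_rfl⟩ hT0
      rw [hy0] at this
      exact this
    linarith
  -- global monotonicity
  have hy'mono : MonotoneOn y' (Set.Ici 0) := by
    apply monotoneOn_of_deriv_nonneg (convex_Ici 0) hy'c
    · intro x hx
      rw [interior_Ici] at hx
      exact (hy' x hx.le).differentiableAt.differentiableWithinAt
    · intro x hx
      rw [interior_Ici] at hx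
      rw [(hy' x hx.le).deriv]
      exact mul_nonneg (hlnn x hx.le) (hpos x hx.le).le
  have hy'h : ∀ t ≥ (0:ℝ), h ≤ y' t := by
    intro t ht
    have := hy'mono Set.self_mem_Ici ht ht
    rwa [hy'0] at this
  -- constants
  set b0 : ℝ := ∫ s in Set.Ioi (0:ℝ), s * l s with hb0def
  set b1 : ℝ := ∫ s in Set.Ioi (0:ℝ), l s with hb1def
  have hb0 : 0 ≤ b0 := setIntegral_nonneg measurableSet_Ioi fun s hs =>
    mul_nonneg (le_of_lt hs) (hlnn s (le_of_lt hs))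
  have hb1 : 0 ≤ b1 := setIntegral_nonneg measurableSet_Ioi fun s hs => hlnn s (le_of_lt hs)
  -- continuity of auxiliary integrands on [0,∞)
  have hconty : ContinuousOn (fun s => l s * y s) (Set.Ici 0) := hl.mul hyc
  have hcontsl : ContinuousOn (fun s => s * l s) (Set.Ici 0) := continuousOn_id.mul hl
  have hcontsly' : ContinuousOn (fun s => s * l s * y' s) (Set.Ici 0) := hcontsl.mul hy'c
  -- interval integrability on [0,t] for t ≥ 0
  have hII : ∀ (f : ℝ → ℝ), ContinuousOn f (Set.Ici 0) → ∀ t ≥ (0:ℝ),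
      IntervalIntegrable f volume 0 t := by
    intro f hf t ht
    apply ContinuousOn.intervalIntegrable
    rw [Set.uIcc_of_le ht]
    exact hf.mono Set.Icc_subset_Ici_self
  -- FTC for y'
  have hy'eq : ∀ t ≥ (0:ℝ), y' t = h + ∫ s in (0:ℝ)..t, l s * y s := by
    intro t ht
    have := intervalIntegral.integral_eq_sub_of_hasDerivAt
      (f := y') (f' := fun s => l s * y s) (a := 0) (b := t)
      (fun x hx => hy' x (by rw [Set.uIcc_of_le ht] at hx; exact hx.1))
      (hII _ hconty t ht)
    rw [hy'0] at this
    linarith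
  -- FTC for y
  have hyeq : ∀ t ≥ (0:ℝ), y t = 1 + ∫ s in (0:ℝ)..t, y' s := by
    intro t ht
    have := intervalIntegral.integral_eq_sub_of_hasDerivAt
      (f := y) (f' := y') (a := 0) (b := t)
      (fun x hx => hy x (by rw [Set.uIcc_of_le ht] at hx; exact hx.1))
      (hII _ hy'c t ht)
    rw [hy0] at this
    linarith
  -- key pointwise bound : y s ≤ 1 + s * y' s
  have hykey : ∀ s ≥ (0:ℝ), y s ≤ 1 + s * y' s := by
    intro s hs
    rw [hyeq s hs]
    have hle : (∫ u in (0:ℝ)..s, y' u) ≤ ∫ u in (0:ℝ)..s, y' s := by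
      apply intervalIntegral.integral_mono_on hs (hII _ hy'c s hs)
        intervalIntegrable_const
      intro x hx
      exact hy'mono hx.1 hs hx.2
    rw [intervalIntegral.integral_const, smul_eq_mul, sub_zero] at hle
    linarith [hle]
  -- interval integral of l bounded by b1, of s*l s by b0
  have hIoc_mono : ∀ (f : ℝ → ℝ), IntegrableOn f (Set.Ioi 0) →
      (∀ s > (0:ℝ), 0 ≤ f s) → ∀ t ≥ (0:ℝ),
      (∫ s in (0:ℝ)..t, f s) ≤ ∫ s in Set.Ioi (0:ℝ), f s := by
    intro f hfint hfnn t ht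
    rw [intervalIntegral.integral_of_le ht]
    apply setIntegral_mono_set hfint
    · exact (ae_restrict_iff' measurableSet_Ioi).2 (ae_of_all _ fun s hs => hfnn s hs)
    · exact HasSubset.Subset.eventuallyLE Set.Ioc_subset_Ioi_self
  have hBle : ∀ t ≥ (0:ℝ), (∫ s in (0:ℝ)..t, s * l s) ≤ b0 :=
    hIoc_mono _ hb0int (fun s hs => mul_nonneg hs.le (hlnn s hs.le))
  have hb1le : ∀ t ≥ (0:ℝ), (∫ s in (0:ℝ)..t, l s) ≤ b1 :=
    hIoc_mono _ hb1int (fun s hs => hlnn s hs.le)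
  set A : ℝ := h + b1 with hAdef
  have hA : 0 ≤ A := by positivity
  set g : ℝ → ℝ := fun t => ∫ s in (0:ℝ)..t, s * l s * y' s with hgdef
  set B : ℝ → ℝ := fun t => ∫ s in (0:ℝ)..t, s * l s with hBdef
  -- integral inequality: y' t ≤ A + g t
  have hineq : ∀ t ≥ (0:ℝ), y' t ≤ A + g t := by
    intro t ht
    rw [hy'eq t ht]
    have hstep : (∫ s in (0:ℝ)..t, l s * y s) ≤ ∫ s in (0:ℝ)..t, (l s + s * l s * y' s) := by
      apply intervalIntegral.integral_mono_on ht (hII _ hconty t ht)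
        ((hII _ hl t ht).add (hII _ hcontsly' t ht))
      intro x hx
      have h1 := hykey x hx.1
      have h2 := hlnn x hx.1
      nlinarith
    rw [intervalIntegral.integral_add (hII _ hl t ht) (hII _ hcontsly' t ht)] at hstep
    have := hb1le t ht
    simp only [hgdef, hAdef]
    linarith
  -- Gronwall: y' t ≤ A * exp b0
  have hy'bound : ∀ t ≥ (0:ℝ), y' t ≤ A * Real.exp b0 := by
    intro t ht
    rcases eq_or_lt_of_le ht with h0 | htpos
    · rw [← h0, hy'0]
      nlinarith [Real.one_le_exp hb0]
    -- derivatives of g and B on (0, t)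
    have hgB_deriv : ∀ x ∈ Set.Ioo (0:ℝ) t,
        HasDerivAt g (x * l x * y' x) x ∧ HasDerivAt B (x * l x) x := by
      intro x hx
      have hx0 : (0:ℝ) < x := hx.1
      have hmem : Set.Ici (0:ℝ) ∈ nhds x := Ici_mem_nhds hx0
      constructor
      · exact intervalIntegral.integral_hasDerivAt_right (hII _ hcontsly' x hx0.le)
          ((hcontsly'.mono Set.Ioi_subset_Ici_self).stronglyMeasurableAtFilter
            isOpen_Ioi x hx0)
          (hcontsly'.continuousAt hmem)
      · exact intervalIntegral.integral_hasDerivAt_right (hII _ hcontsl x hx0.le)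
          ((hcontsl.mono Set.Ioi_subset_Ici_self).stronglyMeasurableAtFilter
            isOpen_Ioi x hx0)
          (hcontsl.continuousAt hmem)
    set ψ : ℝ → ℝ := fun u => (A + g u) * Real.exp (-(B u)) with hψdef
    have hψderiv : ∀ x ∈ Set.Ioo (0:ℝ) t,
        HasDerivAt ψ ((x * l x * y' x) * Real.exp (-(B x))
          + (A + g x) * (Real.exp (-(B x)) * -(x * l x))) x := by
      intro x hx
      obtain ⟨hg', hB'⟩ := hgB_deriv x hx
      have := ((hasDerivAt_const x A).add hg').mul ((hB'.neg).exp)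
      refine this.congr_deriv ?_
      simp only [Pi.add_apply, Pi.neg_apply]
      ring
    -- ψ is antitone on [0, t]
    have hgcont : ContinuousOn g (Set.Icc 0 t) := by
      have : IntegrableOn (fun s => s * l s * y' s) (Set.uIcc 0 t) := by
        rw [Set.uIcc_of_le ht]
        exact (hcontsly'.mono Set.Icc_subset_Ici_self).integrableOn_Icc
      simpa [Set.uIcc_of_le ht] using intervalIntegral.continuousOn_primitive_interval this
    have hBcont : ContinuousOn B (Set.Icc 0 t) := by
      have : IntegrableOn (fun s => s * l s) (Set.uIcc 0 t) := by
        rw [Set.uIcc_of_le ht]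
        exact (hcontsl.mono Set.Icc_subset_Ici_self).integrableOn_Icc
      simpa [Set.uIcc_of_le ht] using intervalIntegral.continuousOn_primitive_interval this
    have hψcont : ContinuousOn ψ (Set.Icc 0 t) :=
      (continuousOn_const.add hgcont).mul ((hBcont.neg).rexp)
    have hψanti : AntitoneOn ψ (Set.Icc 0 t) := by
      apply antitoneOn_of_deriv_nonpos (convex_Icc 0 t) hψcont
      · intro x hx
        rw [interior_Icc] at hx
        exact (hψderiv x hx).differentiableAt.differentiableWithinAt
      · intro x hx
        rw [interior_Icc] at hx
        rw [(hψderiv x hx).deriv]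
        have hexp : 0 < Real.exp (-(B x)) := Real.exp_pos _
        have hxl : 0 ≤ x * l x := mul_nonneg hx.1.le (hlnn x hx.1.le)
        have hiq := hineq x hx.1.le
        nlinarith [mul_nonneg (mul_nonneg hxl hexp.le) (sub_nonneg.2 hiq)]
    have hψle : ψ t ≤ ψ 0 := hψanti ⟨le_rfl, ht⟩ ⟨ht, le_rfl⟩ ht
    have hψ0 : ψ 0 = A := by
      simp [hψdef, hgdef, hBdef]
    have hexpB : Real.exp (B t) ≤ Real.exp b0 := Real.exp_le_exp.2 (hBle t ht)
    have hAg : A + g t ≤ A * Real.exp (B t) := by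
      have hψt : ψ t ≤ A := le_of_le_of_eq hψle hψ0
      have h2 := mul_le_mul_of_nonneg_right hψt (Real.exp_pos (B t)).le
      simp only [hψdef] at h2
      rwa [mul_assoc, ← Real.exp_add, neg_add_cancel, Real.exp_zero, mul_one] at h2
    calc y' t ≤ A + g t := hineq t ht
      _ ≤ A * Real.exp (B t) := hAg
      _ ≤ A * Real.exp b0 := by nlinarith
  -- conclude
  intro t ht
  rw [hyeq t ht]
  have hle : (∫ u in (0:ℝ)..t, y' u) ≤ ∫ u in (0:ℝ)..t, A * Real.exp b0 := by
    apply intervalIntegral.integral_mono_on ht (hII _ hy'c t ht) intervalIntegrable_const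
    intro x hx
    exact hy'bound x hx.1
  rw [intervalIntegral.integral_const, smul_eq_mul, sub_zero] at hle
  have hexp1 : (1:ℝ) ≤ Real.exp b0 := Real.one_le_exp hb0
  have hC : A ≤ h * (1 + b0) + b1 := by simp only [hAdef]; nlinarith
  have h3 : A * Real.exp b0 * t ≤ (h * (1 + b0) + b1) * Real.exp b0 * t :=
    mul_le_mul_of_nonneg_right (mul_le_mul_of_nonneg_right hC (Real.exp_pos b0).le) ht
  nlinarith
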